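/- arXiv:2309.13786 — 4 statements merged into one kernel-verified Lean document; each statement's English description precedes it below -/
import Mathlib

section
/- Let X_1, …, X_n be i.i.d. real random variables with law μ and CDF F(x) = μ((−∞, x]), with order statistics X_(1) ≤ … ≤ X_(n), and let U_(1) ≤ … ≤ U_(n) be the order statistics of n i.i.d. random variables uniformly distributed on [0,1]. Then for any constants 0 ≤ L_1 ≤ L_2 ≤ … ≤ L_n ≤ 1, ℙ(∀ i ∈ {1,…,n} : F(X_(i)) ≥ L_i) ≥ ℙ(∀ i ∈ {1,…,n} : U_(i) ≥ L_i). -/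
open MeasureTheory ProbabilityTheory Set

noncomputable def orderStat {n : ℕ} (x : Fin n → ℝ) : Fin n → ℝ := x ∘ Tuple.sort x

section aux

variable {n : ℕ}

lemma orderStat_comp_monotoneOn {g : ℝ → ℝ} {s : Set ℝ} (hg : MonotoneOn g s)
    (x : Fin n → ℝ) (hx : ∀ j, x j ∈ s) :
    orderStat (g ∘ x) = g ∘ orderStat x := by
  have h1 : Monotone ((g ∘ x) ∘ Tuple.sort x) := by
    intro i j hij
    exact hg (hx _) (hx _) (Tuple.monotone_sort x hij)
  have := Tuple.unique_monotone (f := g ∘ x) (σ := Tuple.sort (g ∘ x)) (τ := Tuple.sort x)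
    (Tuple.monotone_sort (g ∘ x)) h1
  simp only [orderStat]
  rw [this]
  rfl

lemma orderStat_le_iff (x : Fin n → ℝ) (i : Fin n) (t : ℝ) :
    orderStat x i ≤ t ↔ ∃ s : Finset (Fin n), s.card = (i : ℕ) + 1 ∧ ∀ j ∈ s, x j ≤ t := by
  set σ := Tuple.sort x with hσ
  constructor
  · intro h
    refine ⟨(Finset.Iic i).image σ, ?_, ?_⟩
    · rw [Finset.card_image_of_injective _ σ.injective, Fin.card_Iic]
    · intro j hj
      obtain ⟨k, hk, rfl⟩ := Finset.mem_image.1 hj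
      exact le_trans (Tuple.monotone_sort x (Finset.mem_Iic.1 hk)) h
  · rintro ⟨s, hcard, hs⟩
    have : ∃ k ∈ s.image σ.symm, i ≤ k := by
      by_contra hcon
      push_neg at hcon
      have hsub : s.image σ.symm ⊆ Finset.Iio i := by
        intro k hk; exact Finset.mem_Iio.2 (hcon k hk)
      have := Finset.card_le_card hsub
      rw [Finset.card_image_of_injective _ σ.symm.injective, hcard, Fin.card_Iio] at this
      omega
    obtain ⟨k, hk, hik⟩ := this
    obtain ⟨j, hj, rfl⟩ := Finset.mem_image.1 hk
    calc orderStat x i ≤ x (σ (σ.symm j)) := Tuple.monotone_sort x hik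
    _ ≤ t := by rw [Equiv.apply_symm_apply]; exact hs j hj

lemma measurable_orderStat (i : Fin n) : Measurable fun x : Fin n → ℝ => orderStat x i := by
  apply measurable_of_Iic
  intro t
  have : (fun x : Fin n → ℝ => orderStat x i) ⁻¹' Iic t
      = ⋃ (s : Finset (Fin n)) (_ : s.card = (i : ℕ) + 1), ⋂ j ∈ s, {x : Fin n → ℝ | x j ≤ t} := by
    ext x
    simp only [mem_preimage, mem_Iic, orderStat_le_iff, mem_iUnion, mem_iInter, mem_setOf_eq]
    tauto
  rw [this]
  refine MeasurableSet.iUnion fun s => MeasurableSet.iUnion fun _ => ?_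
  exact MeasurableSet.biInter (Set.to_countable _)
    fun j _ => measurableSet_le (measurable_pi_apply j) measurable_const

end aux

section quantile

variable (μ : Measure ℝ) [IsProbabilityMeasure μ]

/-- Quantile function of μ, with junk value 0 outside (0,1). -/
noncomputable def qf : ℝ → ℝ :=
  fun u => if u ∈ Set.Ioo (0:ℝ) 1 then sInf {x | u ≤ cdf μ x} else 0

variable {μ}

lemma qf_set_nonempty {u : ℝ} (hu : u ∈ Set.Ioo (0:ℝ) 1) : {x | u ≤ cdf μ x}.Nonempty := by
  obtain ⟨x, hx⟩ := (Filter.Tendsto.eventually_const_le hu.2 (tendsto_cdf_atTop μ)).exists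
  exact ⟨x, hx⟩

lemma qf_set_bddBelow {u : ℝ} (hu : u ∈ Set.Ioo (0:ℝ) 1) : BddBelow {x | u ≤ cdf μ x} := by
  obtain ⟨x₀, hx₀⟩ := (Filter.Tendsto.eventually_lt_const hu.1 (tendsto_cdf_atBot μ)).exists
  refine ⟨x₀, fun y hy => ?_⟩
  by_contra hlt
  push_neg at hlt
  exact absurd (le_trans hy (monotone_cdf μ hlt.le)) (not_le.2 hx₀)

lemma le_cdf_qf {u : ℝ} (hu : u ∈ Set.Ioo (0:ℝ) 1) : u ≤ cdf μ (qf μ u) := by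
  rw [qf, if_pos hu]
  set q := sInf {x | u ≤ cdf μ x} with hq
  have hT : Filter.Tendsto (cdf μ) (nhdsWithin q (Set.Ioi q)) (nhds (cdf μ q)) :=
    ((cdf μ).right_continuous q).mono Ioi_subset_Ici_self
  refine ge_of_tendsto hT ?_
  filter_upwards [self_mem_nhdsWithin] with y hy
  obtain ⟨a, ha, hay⟩ := (csInf_lt_iff (qf_set_bddBelow hu) (qf_set_nonempty hu)).1 (mem_Ioi.1 hy)
  exact le_trans ha (monotone_cdf μ hay.le)

lemma qf_le_iff {u t : ℝ} (hu : u ∈ Set.Ioo (0:ℝ) 1) :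
    qf μ u ≤ t ↔ u ≤ cdf μ t := by
  constructor
  · intro h
    exact le_trans (le_cdf_qf hu) (monotone_cdf μ h)
  · intro h
    rw [qf, if_pos hu]
    exact csInf_le (qf_set_bddBelow hu) h

lemma qf_monotoneOn : MonotoneOn (qf μ) (Set.Ioo (0:ℝ) 1) := by
  intro u hu v hv huv
  rw [qf, if_pos hu, qf, if_pos hv]
  exact csInf_le_csInf (qf_set_bddBelow hu) (qf_set_nonempty hv)
    (fun x hx => le_trans huv hx)

lemma qf_preimage_Iic (t : ℝ) :
    qf μ ⁻¹' Set.Iic t =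
      (Set.Ioo (0:ℝ) 1 ∩ Set.Iic (cdf μ t)) ∪
        ((Set.Ioo (0:ℝ) 1)ᶜ ∩ (if (0:ℝ) ≤ t then Set.univ else ∅)) := by
  ext u
  by_cases hu : u ∈ Set.Ioo (0:ℝ) 1
  · simp only [mem_preimage, mem_Iic, mem_union, mem_inter_iff, hu, true_and, mem_compl_iff,
      not_true, false_and, or_false, qf_le_iff hu]
  · simp only [mem_preimage, mem_Iic, qf, if_neg hu, mem_union, mem_inter_iff, hu, false_and,
      mem_compl_iff, not_false_iff, true_and, false_or]
    by_cases ht : (0:ℝ) ≤ t <;> simp [ht]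

lemma measurable_qf : Measurable (qf μ) := by
  apply measurable_of_Iic
  intro t
  rw [qf_preimage_Iic]
  refine MeasurableSet.union (measurableSet_Ioo.inter measurableSet_Iic)
    (measurableSet_Ioo.compl.inter ?_)
  by_cases ht : (0:ℝ) ≤ t <;> simp [ht]

lemma restrict_compl_Ioo :
    (volume.restrict (Set.Icc (0:ℝ) 1)) ((Set.Ioo (0:ℝ) 1)ᶜ) = 0 := by
  rw [Measure.restrict_apply measurableSet_Ioo.compl]
  refine measure_mono_null (t := ({0, 1} : Set ℝ)) (fun x hx => ?_)
    (((Set.countable_singleton (1:ℝ)).insert 0).measure_zero volume)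
  obtain ⟨hn, h0, h1⟩ := hx
  simp only [Set.mem_insert_iff, Set.mem_singleton_iff]
  rcases eq_or_lt_of_le h0 with h | h
  · exact Or.inl h.symm
  · right
    rcases eq_or_lt_of_le h1 with h' | h'
    · exact h'
    · exact absurd ⟨h, h'⟩ hn

lemma map_qf_uniform :
    Measure.map (qf μ) (volume.restrict (Set.Icc (0:ℝ) 1)) = μ := by
  have : IsProbabilityMeasure (volume.restrict (Set.Icc (0:ℝ) 1)) := by
    constructor
    rw [Measure.restrict_apply_univ, Real.volume_Icc]
    norm_num
  have hmap : IsProbabilityMeasure (Measure.map (qf μ) (volume.restrict (Set.Icc (0:ℝ) 1))) :=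
    Measure.isProbabilityMeasure_map measurable_qf.aemeasurable
  refine Measure.ext_of_Iic _ _ (fun t => ?_)
  rw [Measure.map_apply measurable_qf measurableSet_Iic, qf_preimage_Iic]
  have hc0 : (volume.restrict (Set.Icc (0:ℝ) 1)) ((Set.Ioo (0:ℝ) 1)ᶜ ∩
      (if (0:ℝ) ≤ t then Set.univ else ∅)) = 0 :=
    measure_mono_null Set.inter_subset_left restrict_compl_Ioo
  have hun : (volume.restrict (Set.Icc (0:ℝ) 1)) ((Set.Ioo (0:ℝ) 1 ∩ Set.Iic (cdf μ t)) ∪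
      ((Set.Ioo (0:ℝ) 1)ᶜ ∩ (if (0:ℝ) ≤ t then Set.univ else ∅)))
      = (volume.restrict (Set.Icc (0:ℝ) 1)) (Set.Ioo (0:ℝ) 1 ∩ Set.Iic (cdf μ t)) :=
    le_antisymm ((measure_union_le _ _).trans (by rw [hc0, add_zero]))
      (measure_mono Set.subset_union_left)
  rw [hun]
  set c := cdf μ t with hc
  have hc1 : c ≤ 1 := cdf_le_one μ t
  have hub : (Set.Ioo (0:ℝ) 1 ∩ Set.Iic c) ⊆ Set.Ioc 0 c :=
    fun x hx => ⟨hx.1.1, hx.2⟩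
  have hlb : Set.Ioo (0:ℝ) c ⊆ Set.Ioo (0:ℝ) 1 ∩ Set.Iic c :=
    fun x hx => ⟨⟨hx.1, lt_of_lt_of_le hx.2 hc1⟩, hx.2.le⟩
  have hIoo : Set.Ioo (0:ℝ) c ⊆ Set.Icc (0:ℝ) 1 := fun x hx =>
    ⟨hx.1.le, le_trans hx.2.le hc1⟩
  have hIoc : Set.Ioc (0:ℝ) c ⊆ Set.Icc (0:ℝ) 1 := fun x hx =>
    ⟨hx.1.le, le_trans hx.2 hc1⟩
  have h1 : (volume.restrict (Set.Icc (0:ℝ) 1)) (Set.Ioo (0:ℝ) 1 ∩ Set.Iic c)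
      ≤ ENNReal.ofReal c := by
    refine le_trans (measure_mono hub) ?_
    rw [Measure.restrict_apply' measurableSet_Icc, Set.inter_eq_left.2 hIoc, Real.volume_Ioc]
    simp
  have h2 : ENNReal.ofReal c
      ≤ (volume.restrict (Set.Icc (0:ℝ) 1)) (Set.Ioo (0:ℝ) 1 ∩ Set.Iic c) := by
    refine le_trans ?_ (measure_mono hlb)
    rw [Measure.restrict_apply' measurableSet_Icc, Set.inter_eq_left.2 hIoo, Real.volume_Ioo]
    simp
  rw [le_antisymm h1 h2, hc, ofReal_cdf]

end quantile

lemma joint_map {Ω : Type*} [MeasurableSpace Ω] (P : Measure Ω) [IsProbabilityMeasure P]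
    {n : ℕ} (X : Fin n → Ω → ℝ) (μ : Measure ℝ) [IsProbabilityMeasure μ]
    (hmeas : ∀ i, Measurable (X i))
    (hindep : iIndepFun X P)
    (hlaw : ∀ i, Measure.map (X i) P = μ) :
    Measure.map (fun ω i => X i ω) P = Measure.pi (fun _ : Fin n => μ) := by
  refine (Measure.pi_eq fun s hs => ?_).symm
  rw [Measure.map_apply (measurable_pi_lambda _ hmeas) (MeasurableSet.univ_pi hs)]
  have hpre : (fun ω i => X i ω) ⁻¹' Set.pi Set.univ s = ⋂ i ∈ Finset.univ, X i ⁻¹' s i := by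
    ext ω
    simp [Set.mem_univ_pi]
  rw [hpre, hindep.measure_inter_preimage_eq_mul Finset.univ (fun i _ => hs i)]
  refine Finset.prod_congr rfl fun i _ => ?_
  rw [← hlaw i, Measure.map_apply (hmeas i) (hs i)]

theorem stmt_2
    {Ω : Type*} [MeasurableSpace Ω] (P : Measure Ω) [IsProbabilityMeasure P]
    {Ω' : Type*} [MeasurableSpace Ω'] (P' : Measure Ω') [IsProbabilityMeasure P']
    (n : ℕ) (X : Fin n → Ω → ℝ) (U : Fin n → Ω' → ℝ)
    (μ : Measure ℝ) [IsProbabilityMeasure μ]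
    (hXmeas : ∀ i, Measurable (X i))
    (hXindep : iIndepFun X P)
    (hXlaw : ∀ i, Measure.map (X i) P = μ)
    (hUmeas : ∀ i, Measurable (U i))
    (hUindep : iIndepFun U P')
    (hUlaw : ∀ i, Measure.map (U i) P' = volume.restrict (Set.Icc (0 : ℝ) 1))
    (L : Fin n → ℝ) (hLmono : Monotone L) (hL0 : ∀ i, 0 ≤ L i) (hL1 : ∀ i, L i ≤ 1) :
    P' {ω | ∀ i, L i ≤ orderStat (fun j => U j ω) i}
      ≤ P {ω | ∀ i, L i ≤ (μ (Set.Iic (orderStat (fun j => X j ω) i))).toReal} := by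
  classical
  set X' : Fin n → Ω' → ℝ := fun i ω => qf μ (U i ω) with hX'
  have hX'meas : ∀ i, Measurable (X' i) := fun i => measurable_qf.comp (hUmeas i)
  have hX'indep : iIndepFun X' P' :=
    hUindep.comp (fun _ => qf μ) (fun _ => measurable_qf)
  have hX'law : ∀ i, Measure.map (X' i) P' = μ := by
    intro i
    have h : X' i = (qf μ) ∘ (U i) := rfl
    rw [h, ← Measure.map_map measurable_qf (hUmeas i), hUlaw i, map_qf_uniform]
  set F : ℝ → ℝ := fun t => (μ (Set.Iic t)).toReal with hF
  have hFcdf : ∀ t, F t = cdf μ t := fun t => (cdf_eq_real μ t).symm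
  have hFmono : Monotone F := fun a b hab =>
    ENNReal.toReal_mono (measure_ne_top μ _) (measure_mono (Set.Iic_subset_Iic.2 hab))
  set B : Set (Fin n → ℝ) := {x | ∀ i, L i ≤ F (orderStat x i)} with hB
  have hBmeas : MeasurableSet B := by
    have h : B = ⋂ i, (fun x : Fin n → ℝ => F (orderStat x i)) ⁻¹' Set.Ici (L i) := by
      ext x; simp [hB]
    rw [h]
    exact MeasurableSet.iInter fun i =>
      (hFmono.measurable.comp (measurable_orderStat i)) measurableSet_Ici
  have hG : ∀ᵐ ω ∂P', ∀ i, U i ω ∈ Set.Ioo (0:ℝ) 1 := by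
    rw [MeasureTheory.ae_all_iff]
    intro i
    rw [MeasureTheory.ae_iff]
    have h : {ω | ¬ U i ω ∈ Set.Ioo (0:ℝ) 1} = U i ⁻¹' (Set.Ioo (0:ℝ) 1)ᶜ := rfl
    rw [h, ← Measure.map_apply (hUmeas i) measurableSet_Ioo.compl, hUlaw i]
    exact restrict_compl_Ioo
  have hsub : P' {ω | ∀ i, L i ≤ orderStat (fun j => U j ω) i}
      ≤ P' {ω | (fun i => X' i ω) ∈ B} := by
    refine measure_mono_ae ?_
    filter_upwards [hG] with ω hω hmem
    intro i
    set u : Fin n → ℝ := fun j => U j ω with hu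
    have hcomp : orderStat (qf μ ∘ u) = qf μ ∘ orderStat u :=
      orderStat_comp_monotoneOn qf_monotoneOn u hω
    have hgoal : orderStat (fun j => X' j ω) i = qf μ (orderStat u i) := by
      have : (fun j => X' j ω) = qf μ ∘ u := rfl
      rw [this, hcomp]; rfl
    show L i ≤ F (orderStat (fun j => X' j ω) i)
    rw [hgoal, hFcdf]
    have hmemIoo : orderStat u i ∈ Set.Ioo (0:ℝ) 1 := by
      have h : orderStat u i = u (Tuple.sort u i) := rfl
      rw [h]; exact hω _
    exact le_trans (hmem i) (le_cdf_qf hmemIoo)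
  calc P' {ω | ∀ i, L i ≤ orderStat (fun j => U j ω) i}
      ≤ P' {ω | (fun i => X' i ω) ∈ B} := hsub
    _ = Measure.map (fun ω i => X' i ω) P' B :=
        (Measure.map_apply (measurable_pi_lambda _ hX'meas) hBmeas).symm
    _ = Measure.pi (fun _ : Fin n => μ) B := by
        rw [joint_map P' X' μ hX'meas hX'indep hX'law]
    _ = Measure.map (fun ω i => X i ω) P B := by
        rw [joint_map P X μ hXmeas hXindep hXlaw]
    _ = P {ω | ∀ i, L i ≤ F (orderStat (fun j => X j ω) i)} := by
        rw [Measure.map_apply (measurable_pi_lambda _ hXmeas) hBmeas]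
        rfl
end

section
/- Let X_1, …, X_n be i.i.d. real random variables with law μ, CDF F(x) = μ((−∞, x]), and left limit F(x⁻) := μ((−∞, x)), with order statistics X_(1) ≤ … ≤ X_(n). Let U_(1) ≤ … ≤ U_(n) be the order statistics of n i.i.d. random variables uniformly distributed on [0,1]. Then for any constants 0 ≤ L_1 ≤ L_2 ≤ … ≤ L_n ≤ 1, ℙ(∀ i ∈ {1,…,n} : F(X_(i)⁻) ≤ 1 − L_{n−i+1}) ≥ ℙ(∀ i ∈ {1,…,n} : U_(i) ≥ L_i). -/
open MeasureTheory ProbabilityTheory Set Filter Topology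

namespace OSAux


noncomputable def phi : ℝ → ℝ := fun x => x / (1 + |x|)
noncomputable def psi : ℝ → ℝ := fun y => y / (1 - |y|)

lemma phi_strictMono : StrictMono phi := by
  intro x y h
  unfold phi
  rw [div_lt_div_iff₀ (by positivity) (by positivity)]
  rcases abs_cases x with ⟨hx, _⟩ | ⟨hx, _⟩ <;> rcases abs_cases y with ⟨hy, _⟩ | ⟨hy, _⟩ <;>
    nlinarith

lemma abs_phi_lt_one (x : ℝ) : |phi x| < 1 := by
  unfold phi
  rw [abs_div, abs_of_pos (by positivity : (0:ℝ) < 1 + |x|), div_lt_one (by positivity)]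
  linarith [abs_nonneg x]

lemma psi_phi (x : ℝ) : psi (phi x) = x := by
  unfold psi phi
  rw [abs_div, abs_of_pos (by positivity : (0:ℝ) < 1 + |x|)]
  have h : (0:ℝ) < 1 + |x| := by positivity
  have h2 : 1 - |x| / (1 + |x|) = 1 / (1 + |x|) := by field_simp; ring
  rw [h2]
  field_simp

lemma phi_psi {y : ℝ} (h : |y| < 1) : phi (psi y) = y := by
  unfold psi phi
  have h1 : (0:ℝ) < 1 - |y| := by linarith
  rw [abs_div, abs_of_pos h1]
  have h2 : 1 + |y| / (1 - |y|) = 1 / (1 - |y|) := by field_simp; ring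
  rw [h2]
  field_simp

lemma measurable_psi : Measurable psi :=
  measurable_id.div (measurable_const.sub continuous_abs.measurable)




instance unif_prob : IsProbabilityMeasure (volume.restrict (Icc (0:ℝ) 1)) := by
  constructor
  rw [Measure.restrict_apply MeasurableSet.univ, univ_inter, Real.volume_Icc]
  norm_num



namespace Q

variable (μ : Measure ℝ) [IsProbabilityMeasure μ]

lemma measurable_phi : Measurable phi := phi_strictMono.monotone.measurable

noncomputable def mt : Measure ℝ := Measure.map phi μ

instance : IsProbabilityMeasure (mt μ) :=
  Measure.isProbabilityMeasure_map (measurable_phi).aemeasurable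

lemma cdf_mt_phi (x : ℝ) : cdf (mt μ) (phi x) = cdf μ x := by
  rw [cdf_eq_real, cdf_eq_real, measureReal_def, measureReal_def]
  congr 1
  rw [mt, Measure.map_apply measurable_phi measurableSet_Iic]
  congr 1
  ext z
  simp [phi_strictMono.le_iff_le]

lemma cdf_mt_one : cdf (mt μ) 1 = 1 := by
  rw [cdf_eq_real, measureReal_def]
  have : mt μ (Iic 1) = 1 := by
    rw [mt, Measure.map_apply measurable_phi measurableSet_Iic]
    have : phi ⁻¹' Iic (1:ℝ) = univ := by
      ext z
      simp only [mem_preimage, mem_Iic, mem_univ, iff_true]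
      exact le_of_lt (lt_of_abs_lt (abs_phi_lt_one z))
    rw [this, measure_univ]
  rw [this, ENNReal.toReal_one]

lemma cdf_mt_nonpos {y : ℝ} (hy : y ≤ -1) : cdf (mt μ) y = 0 := by
  rw [cdf_eq_real, measureReal_def]
  have : mt μ (Iic y) = 0 := by
    rw [mt, Measure.map_apply measurable_phi measurableSet_Iic]
    have : phi ⁻¹' Iic y = ∅ := by
      ext z
      simp only [mem_preimage, mem_Iic, mem_empty_iff_false, iff_false, not_le]
      have := neg_lt_of_abs_lt (abs_phi_lt_one z)
      linarith
    rw [this, measure_empty]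
  rw [this, ENNReal.toReal_zero]

noncomputable def Aset (v : ℝ) : Set ℝ :=
  {y | 1 - min (max v 0) 1 ≤ cdf (mt μ) y} ∩ Icc (-1) 1

lemma one_mem_Aset (v : ℝ) : (1:ℝ) ∈ Aset μ v := by
  refine ⟨?_, by norm_num, le_rfl⟩
  rw [mem_setOf_eq, cdf_mt_one]
  have : 0 ≤ min (max v 0) 1 := le_min (le_max_right _ _) zero_le_one
  linarith

lemma Aset_nonempty (v : ℝ) : (Aset μ v).Nonempty := ⟨1, one_mem_Aset μ v⟩

lemma Aset_bddBelow (v : ℝ) : BddBelow (Aset μ v) := ⟨-1, fun _ hy => hy.2.1⟩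

noncomputable def qt (v : ℝ) : ℝ := sInf (Aset μ v)

lemma qt_antitone : Antitone (qt μ) := by
  intro v v' hvv'
  refine csInf_le_csInf (Aset_bddBelow μ v') (Aset_nonempty μ v) ?_
  intro y hy
  refine ⟨?_, hy.2⟩
  have h1 : min (max v 0) 1 ≤ min (max v' 0) 1 :=
    min_le_min (max_le_max hvv' le_rfl) le_rfl
  have := hy.1
  rw [mem_setOf_eq] at this ⊢
  linarith

noncomputable def T : ℝ → ℝ := fun v => psi (qt μ v)

lemma measurable_T : Measurable (T μ) := measurable_psi.comp (qt_antitone μ).measurable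

variable {v : ℝ} (hv : v ∈ Ioo (0:ℝ) 1)

lemma w_eq (hv : v ∈ Ioo (0:ℝ) 1) : 1 - min (max v 0) 1 = 1 - v := by
  rw [max_eq_left hv.1.le, min_eq_left hv.2.le]

lemma F1 (hv : v ∈ Ioo (0:ℝ) 1) : 1 - v ≤ cdf (mt μ) (qt μ v) := by
  have hub : ∀ y ∈ Ioi (qt μ v), 1 - v ≤ cdf (mt μ) y := by
    intro y hy
    obtain ⟨z, hz, hzy⟩ := exists_lt_of_csInf_lt (Aset_nonempty μ v) hy
    have h1 := hz.1
    rw [mem_setOf_eq, w_eq hv] at h1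
    exact h1.trans (monotone_cdf _ hzy.le)
  have hcont : Filter.Tendsto (cdf (mt μ)) (nhdsWithin (qt μ v) (Ioi (qt μ v)))
      (nhds (cdf (mt μ) (qt μ v))) :=
    ((cdf (mt μ)).right_continuous _).mono Ioi_subset_Ici_self
  exact ge_of_tendsto hcont (eventually_mem_nhdsWithin.mono hub)

lemma F2 (hv : v ∈ Ioo (0:ℝ) 1) (y : ℝ) : qt μ v ≤ y ↔ 1 - v ≤ cdf (mt μ) y := by
  constructor
  · intro h
    exact (F1 μ hv).trans (monotone_cdf _ h)
  · intro h
    rcases le_or_gt 1 y with h1 | h1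
    · exact (csInf_le (Aset_bddBelow μ v) (one_mem_Aset μ v)).trans h1
    · have h2 : -1 ≤ y := by
        by_contra h3
        push_neg at h3
        rw [cdf_mt_nonpos μ h3.le] at h
        linarith [hv.2]
      refine csInf_le (Aset_bddBelow μ v) ⟨?_, h2, h1.le⟩
      rw [mem_setOf_eq, w_eq hv]
      exact h

lemma qt_lt_one (hv : v ∈ Ioo (0:ℝ) 1) : qt μ v < 1 := by
  obtain ⟨x0, hx0⟩ : ∃ x, 1 - v ≤ cdf μ x :=
    ((tendsto_cdf_atTop (μ := μ)).eventually
      (eventually_ge_nhds (by linarith [hv.1] : 1 - v < 1))).exists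
  have hmem : phi x0 ∈ Aset μ v := by
    refine ⟨?_, (neg_lt_of_abs_lt (abs_phi_lt_one x0)).le,
      (lt_of_abs_lt (abs_phi_lt_one x0)).le⟩
    rw [mem_setOf_eq, w_eq hv, cdf_mt_phi]
    exact hx0
  exact lt_of_le_of_lt (csInf_le (Aset_bddBelow μ v) hmem) (lt_of_abs_lt (abs_phi_lt_one x0))

lemma abs_qt_lt_one (hv : v ∈ Ioo (0:ℝ) 1) : |qt μ v| < 1 := by
  rw [abs_lt]
  refine ⟨?_, qt_lt_one μ hv⟩
  by_contra h
  push_neg at h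
  have := F1 μ hv
  have h0 : cdf (mt μ) (qt μ v) ≤ 0 := by
    rw [← cdf_mt_nonpos μ (le_refl (-1:ℝ))]
    exact monotone_cdf _ h
  linarith [hv.2]

lemma T_le_iff (hv : v ∈ Ioo (0:ℝ) 1) (x : ℝ) : T μ v ≤ x ↔ 1 - cdf μ x ≤ v := by
  have step1 : T μ v ≤ x ↔ qt μ v ≤ phi x := by
    constructor
    · intro h
      have := phi_strictMono.monotone h
      rwa [T, phi_psi (abs_qt_lt_one μ hv)] at this
    · intro h
      by_contra h2
      push_neg at h2
      have h3 := phi_strictMono h2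
      rw [T, phi_psi (abs_qt_lt_one μ hv)] at h3
      have := h3
      exact absurd h (not_le.mpr this)
  rw [step1, F2 μ hv, cdf_mt_phi]
  constructor <;> intro <;> linarith

lemma measure_Iio_le {ν : Measure ℝ} {a : ℝ} {c : ENNReal}
    (h : ∀ x < a, ν (Iic x) ≤ c) : ν (Iio a) ≤ c := by
  have hset : Iio a = ⋃ k : ℕ, Iic (a - ((k:ℝ)+1)⁻¹) := by
    ext y
    simp only [mem_Iio, mem_iUnion, mem_Iic]
    constructor
    · intro hy
      obtain ⟨k, hk⟩ := exists_nat_one_div_lt (by linarith : 0 < a - y)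
      refine ⟨k, ?_⟩
      rw [one_div] at hk
      linarith
    · rintro ⟨k, hk⟩
      have : (0:ℝ) < ((k:ℝ)+1)⁻¹ := by positivity
      linarith
  rw [hset, Directed.measure_iUnion]
  · refine iSup_le fun k => h _ ?_
    have : (0:ℝ) < ((k:ℝ)+1)⁻¹ := by positivity
    linarith
  · refine Monotone.directed_le fun k l hkl => Iic_subset_Iic.mpr ?_
    have hc : (k:ℝ) ≤ (l:ℝ) := Nat.cast_le.mpr hkl
    have : ((l:ℝ)+1)⁻¹ ≤ ((k:ℝ)+1)⁻¹ := by
      apply inv_anti₀ (by positivity)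
      linarith
    linarith

lemma P2 (hv : v ∈ Ioo (0:ℝ) 1) : (μ (Iio (T μ v))).toReal ≤ 1 - v := by
  have h1 : μ (Iio (T μ v)) ≤ ENNReal.ofReal (1 - v) := by
    apply measure_Iio_le
    intro x hx
    have h2 : ¬ (1 - cdf μ x ≤ v) := by
      rw [← T_le_iff μ hv]
      exact not_le.mpr hx
    push_neg at h2
    rw [← ofReal_cdf]
    exact ENNReal.ofReal_le_ofReal (by linarith)
  exact ENNReal.toReal_le_of_le_ofReal (by linarith [hv.2]) h1

lemma P1 : Measure.map (T μ) (volume.restrict (Icc (0:ℝ) 1)) = μ := by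
  haveI : IsProbabilityMeasure (Measure.map (T μ) (volume.restrict (Icc (0:ℝ) 1))) :=
    Measure.isProbabilityMeasure_map (measurable_T μ).aemeasurable
  refine Measure.ext_of_Iic _ _ fun x => ?_
  rw [Measure.map_apply (measurable_T μ) measurableSet_Iic,
    Measure.restrict_apply ((measurable_T μ) measurableSet_Iic)]
  set c := cdf μ x with hc
  have hc0 : 0 ≤ c := cdf_nonneg μ x
  have hc1 : c ≤ 1 := cdf_le_one μ x
  have key : (T μ ⁻¹' Iic x) ∩ Ioo 0 1 = Ici (1 - c) ∩ Ioo 0 1 := by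
    ext v
    simp only [mem_inter_iff, mem_preimage, mem_Iic, mem_Ici, and_congr_left_iff]
    intro hv
    rw [T_le_iff μ hv x, ← hc]
  have hpair : volume ({0, 1} : Set ℝ) = 0 :=
    Set.Finite.measure_zero (by simp) volume
  have hsub : (T μ ⁻¹' Iic x) ∩ Icc 0 1 ⊆ ((T μ ⁻¹' Iic x) ∩ Ioo 0 1) ∪ {0, 1} := by
    intro v hv
    rcases eq_or_lt_of_le hv.2.1 with h0 | h0
    · exact Or.inr (Or.inl h0.symm)
    rcases eq_or_lt_of_le hv.2.2 with h1 | h1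
    · exact Or.inr (Or.inr h1)
    exact Or.inl ⟨hv.1, h0, h1⟩
  have heq : volume ((T μ ⁻¹' Iic x) ∩ Icc 0 1) = volume (Ici (1 - c) ∩ Ioo 0 1) := by
    refine le_antisymm ?_ ?_
    · calc volume ((T μ ⁻¹' Iic x) ∩ Icc 0 1)
          ≤ volume (((T μ ⁻¹' Iic x) ∩ Ioo 0 1) ∪ {0, 1}) := measure_mono hsub
        _ ≤ volume ((T μ ⁻¹' Iic x) ∩ Ioo 0 1) + volume ({0,1} : Set ℝ) := measure_union_le _ _
        _ = volume (Ici (1 - c) ∩ Ioo 0 1) := by rw [key, hpair, add_zero]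
    · rw [← key]
      exact measure_mono (inter_subset_inter_right _ Ioo_subset_Icc_self)
  rw [heq]
  rcases le_or_gt (1 - c) 0 with h | h
  · have : Ici (1 - c) ∩ Ioo (0:ℝ) 1 = Ioo 0 1 := by
      rw [inter_eq_right]
      intro v hv
      exact le_trans h hv.1.le
    rw [this, Real.volume_Ioo, ← ofReal_cdf, ← hc]
    have : c = 1 := le_antisymm hc1 (by linarith)
    rw [this]
    norm_num
  · have : Ici (1 - c) ∩ Ioo (0:ℝ) 1 = Ico (1 - c) 1 := by
      ext v
      simp only [mem_inter_iff, mem_Ici, mem_Ioo, mem_Ico]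
      constructor
      · rintro ⟨h1, _, h3⟩; exact ⟨h1, h3⟩
      · rintro ⟨h1, h2⟩; exact ⟨h1, lt_of_lt_of_le h (by linarith), h2⟩
    rw [this, Real.volume_Ico, ← ofReal_cdf, ← hc]
    norm_num


end Q

lemma joint_map_eq_pi {Ω : Type*} [MeasurableSpace Ω] (P : Measure Ω) [IsProbabilityMeasure P]
    {n : ℕ} (X : Fin n → Ω → ℝ) (hm : ∀ i, Measurable (X i))
    (hi : iIndepFun X P) :
    Measure.map (fun ω i => X i ω) P = Measure.pi fun i => Measure.map (X i) P := by
  haveI : ∀ i, IsProbabilityMeasure (Measure.map (X i) P) :=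
    fun i => Measure.isProbabilityMeasure_map (hm i).aemeasurable
  refine (Measure.pi_eq fun s hs => ?_).symm
  rw [Measure.map_apply (measurable_pi_lambda _ hm) (MeasurableSet.univ_pi hs)]
  have heq : (fun ω i => X i ω) ⁻¹' Set.pi univ s = ⋂ i, X i ⁻¹' s i := by
    ext ω; simp [Set.mem_univ_pi]
  rw [heq, hi.meas_iInter fun i => ⟨s i, hs i, rfl⟩]
  exact Finset.prod_congr rfl fun i _ => (Measure.map_apply (hm i) (hs i)).symm



variable {n : ℕ}

lemma card_comp_perm (x : Fin n → ℝ) (σ : Equiv.Perm (Fin n)) (a : ℝ) :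
    Fintype.card {j // x (σ j) ≤ a} = Fintype.card {j // x j ≤ a} :=
  Fintype.card_congr (Equiv.subtypeEquiv σ fun _ => Iff.rfl)

lemma orderStat_le_iff (x : Fin n → ℝ) (i : Fin n) (a : ℝ) :
    orderStat x i ≤ a ↔ (i : ℕ) < Fintype.card {j // x j ≤ a} := by
  rw [← card_comp_perm x (Tuple.sort x) a]
  rw [Fintype.card_subtype]
  exact (Tuple.lt_card_le_iff_apply_le_of_monotone (f := x ∘ ⇑(Tuple.sort x)) (a := a)
    (j := i) (Tuple.monotone_sort x)).symm

lemma orderStat_mono {x y : Fin n → ℝ} (h : ∀ j, x j ≤ y j) (i : Fin n) :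
    orderStat x i ≤ orderStat y i := by
  rw [orderStat_le_iff]
  refine lt_of_lt_of_le ((orderStat_le_iff y i (orderStat y i)).mp le_rfl) ?_
  exact Fintype.card_subtype_mono _ _ fun j hj => (h j).trans hj

lemma measurable_card (a : ℝ) :
    Measurable fun y : Fin n → ℝ => Fintype.card {j // y j ≤ a} := by
  have : (fun y : Fin n → ℝ => Fintype.card {j // y j ≤ a})
      = fun y => ∑ j, if y j ≤ a then 1 else 0 := by
    funext y; rw [Fintype.card_subtype, Finset.card_filter]
  rw [this]
  refine Finset.measurable_sum _ fun j _ => Measurable.ite ?_ measurable_const measurable_const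
  exact (measurable_pi_apply j) measurableSet_Iic

lemma measurable_orderStat (i : Fin n) :
    Measurable fun x : Fin n → ℝ => orderStat x i := by
  apply measurable_of_Iic
  intro a
  have : (fun x : Fin n → ℝ => orderStat x i) ⁻¹' Iic a
      = (fun y : Fin n → ℝ => Fintype.card {j // y j ≤ a}) ⁻¹' Ioi (i : ℕ) := by
    ext y; simp [orderStat_le_iff]
  rw [this]
  exact measurable_card a (by trivial)

lemma orderStat_comp_monotone {g : ℝ → ℝ} (hg : Monotone g) (x : Fin n → ℝ) :
    orderStat (g ∘ x) = g ∘ orderStat x := by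
  have hmono : Monotone ((g ∘ x) ∘ ⇑(Tuple.sort x)) := by
    intro k l hkl
    exact hg (Tuple.monotone_sort x hkl)
  have h := (Tuple.comp_sort_eq_comp_iff_monotone (f := g ∘ x) (σ := Tuple.sort x)).mpr hmono
  unfold orderStat
  rw [← h]
  rfl

lemma orderStat_const_sub (x : Fin n → ℝ) (a : ℝ) (i : Fin n) :
    orderStat (fun j => a - x j) i = a - orderStat x i.rev := by
  set f : Fin n → ℝ := fun j => a - x j with hf
  set τ : Equiv.Perm (Fin n) := Fin.revPerm.trans (Tuple.sort x) with hτ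
  have hmono : Monotone (f ∘ ⇑τ) := by
    intro k l hkl
    simp only [Function.comp_apply, hf, hτ, Equiv.trans_apply, Fin.revPerm_apply]
    have : x (Tuple.sort x l.rev) ≤ x (Tuple.sort x k.rev) :=
      Tuple.monotone_sort x (Fin.rev_le_rev.mpr hkl)
    linarith
  have h := (Tuple.comp_sort_eq_comp_iff_monotone (f := f) (σ := τ)).mpr hmono
  have h' := congrFun h i
  simp only [Function.comp_apply, hτ, Equiv.trans_apply, Fin.revPerm_apply] at h'
  unfold orderStat
  simp only [Function.comp_apply]
  rw [← h']

end OSAux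

theorem stmt_3
    {Ω : Type*} [MeasurableSpace Ω] (P : Measure Ω) [IsProbabilityMeasure P]
    {Ω' : Type*} [MeasurableSpace Ω'] (P' : Measure Ω') [IsProbabilityMeasure P']
    (n : ℕ) (X : Fin n → Ω → ℝ) (U : Fin n → Ω' → ℝ)
    (μ : Measure ℝ) [IsProbabilityMeasure μ]
    (hXmeas : ∀ i, Measurable (X i))
    (hXindep : iIndepFun X P)
    (hXlaw : ∀ i, Measure.map (X i) P = μ)
    (hUmeas : ∀ i, Measurable (U i))
    (hUindep : iIndepFun U P')
    (hUlaw : ∀ i, Measure.map (U i) P' = volume.restrict (Set.Icc (0 : ℝ) 1))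
    (L : Fin n → ℝ) (hLmono : Monotone L) (hL0 : ∀ i, 0 ≤ L i) (hL1 : ∀ i, L i ≤ 1) :
    P' {ω | ∀ i, L i ≤ orderStat (fun j => U j ω) i}
      ≤ P {ω | ∀ i, (μ (Set.Iio (orderStat (fun j => X j ω) i))).toReal ≤ 1 - L i.rev} := by
  classical
  set unif : Measure ℝ := volume.restrict (Icc (0:ℝ) 1) with hunif
  set g : ℝ → ℝ := fun t => (μ (Iio t)).toReal with hg
  have hgmono : Monotone g := fun s t hst =>
    ENNReal.toReal_mono (measure_ne_top μ _) (measure_mono (Iio_subset_Iio hst))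
  have hgmeas : Measurable g := hgmono.measurable
  set E : Set (Fin n → ℝ) := {u | ∀ i, L i ≤ orderStat u i} with hE
  set E' : Set (Fin n → ℝ) := {x | ∀ i, orderStat (g ∘ x) i ≤ 1 - L i.rev} with hE'
  have hEm : MeasurableSet E := by
    have h : E = ⋂ i, (fun u => orderStat u i) ⁻¹' Ici (L i) := by ext u; simp [hE]
    rw [h]
    exact MeasurableSet.iInter fun i => (OSAux.measurable_orderStat i) measurableSet_Ici
  have hE'm : MeasurableSet E' := by
    have h : E' = ⋂ i, ((fun x : Fin n → ℝ => orderStat (g ∘ x) i) ⁻¹' Iic (1 - L i.rev)) := by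
      ext x; simp [hE']
    rw [h]
    refine MeasurableSet.iInter fun i => ?_
    exact ((OSAux.measurable_orderStat i).comp
      (measurable_pi_lambda _ fun j => hgmeas.comp (measurable_pi_apply j))) measurableSet_Iic
  have hUvec : Measurable fun ω (i : Fin n) => U i ω := measurable_pi_lambda _ hUmeas
  have hXvec : Measurable fun ω (i : Fin n) => X i ω := measurable_pi_lambda _ hXmeas
  have hLHS : P' {ω | ∀ i, L i ≤ orderStat (fun j => U j ω) i}
      = (Measure.pi fun _ : Fin n => unif) E := by
    have h1 : {ω | ∀ i, L i ≤ orderStat (fun j => U j ω) i} = (fun ω i => U i ω) ⁻¹' E := rfl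
    rw [h1, ← Measure.map_apply hUvec hEm, OSAux.joint_map_eq_pi P' U hUmeas hUindep]
    have h2 : (fun i : Fin n => Measure.map (U i) P') = fun _ => unif := funext fun i => hUlaw i
    rw [h2]
  have hRHS : P {ω | ∀ i, (μ (Iio (orderStat (fun j => X j ω) i))).toReal ≤ 1 - L i.rev}
      = (Measure.pi fun _ : Fin n => μ) E' := by
    have h0 : ∀ (x : Fin n → ℝ) (i : Fin n),
        (μ (Iio (orderStat x i))).toReal = orderStat (g ∘ x) i := by
      intro x i
      rw [OSAux.orderStat_comp_monotone hgmono x]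
      rfl
    have h1 : {ω | ∀ i, (μ (Iio (orderStat (fun j => X j ω) i))).toReal ≤ 1 - L i.rev}
        = (fun ω i => X i ω) ⁻¹' E' := by
      ext ω
      simp only [hE', mem_setOf_eq, mem_preimage]
      exact forall_congr' fun i => by rw [h0]
    rw [h1, ← Measure.map_apply hXvec hE'm, OSAux.joint_map_eq_pi P X hXmeas hXindep]
    have h2 : (fun i : Fin n => Measure.map (X i) P) = fun _ => μ := funext hXlaw
    rw [h2]
  rw [hLHS, hRHS]
  haveI : IsProbabilityMeasure unif := OSAux.unif_prob
  have hpres : MeasurePreserving (OSAux.Q.T μ) unif μ :=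
    ⟨OSAux.Q.measurable_T μ, OSAux.Q.P1 μ⟩
  have hpi : MeasurePreserving (fun u (i : Fin n) => OSAux.Q.T μ (u i))
      (Measure.pi fun _ => unif) (Measure.pi fun _ => μ) :=
    measurePreserving_pi _ _ fun _ => hpres
  rw [← hpi.measure_preimage hE'm.nullMeasurableSet]
  set B : Set (Fin n → ℝ) := Set.pi univ fun _ => Ioo (0:ℝ) 1 with hB
  have hBm : MeasurableSet B := MeasurableSet.univ_pi fun _ => measurableSet_Ioo
  have hBc : (Measure.pi fun _ : Fin n => unif) Bᶜ = 0 := by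
    rw [measure_compl hBm (measure_ne_top _ _)]
    have h1 : (Measure.pi fun _ : Fin n => unif) B = 1 := by
      rw [hB, Measure.pi_pi]
      have h2 : unif (Ioo 0 1) = 1 := by
        rw [hunif, Measure.restrict_apply measurableSet_Ioo,
          inter_eq_left.mpr Ioo_subset_Icc_self, Real.volume_Ioo]
        norm_num
      simp [h2]
    rw [h1, measure_univ, tsub_self]
  have hsub : E ∩ B ⊆ (fun u (i : Fin n) => OSAux.Q.T μ (u i)) ⁻¹' E' := by
    rintro u ⟨huE, huB⟩
    intro i
    have hcoord : ∀ j, (g ∘ fun j => OSAux.Q.T μ (u j)) j ≤ (fun j => 1 - u j) j := by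
      intro j
      exact OSAux.Q.P2 μ (huB j (mem_univ j))
    calc orderStat (g ∘ fun j => OSAux.Q.T μ (u j)) i
        ≤ orderStat (fun j => 1 - u j) i := OSAux.orderStat_mono hcoord i
      _ = 1 - orderStat u i.rev := OSAux.orderStat_const_sub u 1 i
      _ ≤ 1 - L i.rev := by linarith [huE i.rev]
  calc (Measure.pi fun _ : Fin n => unif) E
      ≤ (Measure.pi fun _ : Fin n => unif) ((E ∩ B) ∪ Bᶜ) := by
        refine measure_mono fun u hu => ?_
        by_cases hb : u ∈ B
        · exact Or.inl ⟨hu, hb⟩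
        · exact Or.inr hb
    _ ≤ (Measure.pi fun _ : Fin n => unif) (E ∩ B)
        + (Measure.pi fun _ : Fin n => unif) Bᶜ := measure_union_le _ _
    _ = (Measure.pi fun _ : Fin n => unif) (E ∩ B) := by rw [hBc, add_zero]
    _ ≤ (Measure.pi fun _ : Fin n => unif)
        ((fun u (i : Fin n) => OSAux.Q.T μ (u i)) ⁻¹' E') := measure_mono hsub
end

section
/- Let X be a nonnegative integrable real random variable with CDF F and generalized inverse F⁻(p) = inf{x : F(x) ≥ p}, and let X′ be an independent copy of X. Then 𝔼|X − X′| = 2 ∫_0^1 (2p − 1) F⁻(p) dp. -/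
open MeasureTheory ProbabilityTheory Set Filter


lemma aux_nonempty (μ : Measure ℝ) [IsProbabilityMeasure μ] {p : ℝ} (hp1 : p < 1) :
    {x | p ≤ cdf μ x}.Nonempty :=
  ((tendsto_cdf_atTop μ).eventually (eventually_ge_nhds hp1)).exists

lemma aux_lb (μ : Measure ℝ) [IsProbabilityMeasure μ] (h0 : μ (Iio 0) = 0) {p : ℝ}
    (hp0 : 0 < p) : ∀ x ∈ {x | p ≤ cdf μ x}, (0:ℝ) ≤ x := by
  intro x hx
  by_contra h
  push_neg at h
  have hz : cdf μ x = 0 := by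
    have : μ (Iic x) = 0 := measure_mono_null (Iic_subset_Iio.mpr h) h0
    rw [cdf_eq_real, measureReal_def, this, ENNReal.toReal_zero]
  simp only [mem_setOf_eq, hz] at hx
  linarith

lemma aux_mem (μ : Measure ℝ) [IsProbabilityMeasure μ] {p : ℝ} (hp1 : p < 1) :
    p ≤ cdf μ (sInf {x | p ≤ cdf μ x}) := by
  rw [← (cdf μ).iInf_rat_gt_eq]
  have : Nonempty {r' : ℚ // sInf {x | p ≤ cdf μ x} < (r' : ℝ)} := by
    obtain ⟨q, hq⟩ := exists_rat_gt (sInf {x | p ≤ cdf μ x})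
    exact ⟨⟨q, hq⟩⟩
  refine le_ciInf fun r => ?_
  obtain ⟨x, hx, hxr⟩ := exists_lt_of_csInf_lt (aux_nonempty μ hp1) r.2
  exact hx.trans (monotone_cdf μ hxr.le)

lemma aux_le_iff (μ : Measure ℝ) [IsProbabilityMeasure μ] (h0 : μ (Iio 0) = 0) {p : ℝ}
    (hp : p ∈ Ioo (0:ℝ) 1) (t : ℝ) :
    sInf {x | p ≤ cdf μ x} ≤ t ↔ p ≤ cdf μ t := by
  constructor
  · exact fun h => (aux_mem μ hp.2).trans (monotone_cdf μ h)
  · exact fun h => csInf_le ⟨0, aux_lb μ h0 hp.1⟩ h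

section
variable (μ : Measure ℝ) [IsProbabilityMeasure μ]

lemma aux_Gt (t : ℝ) : (μ (Ioi t)).toReal = 1 - cdf μ t := by
  have h1 : μ (Ioi t) = 1 - μ (Iic t) := by
    rw [← compl_Iic, measure_compl measurableSet_Iic (measure_ne_top _ _), measure_univ]
  rw [h1, ENNReal.toReal_sub_of_le prob_le_one ENNReal.one_ne_top, ENNReal.toReal_one,
    cdf_eq_real, measureReal_def]

lemma aux_ofReal (t : ℝ) : ENNReal.ofReal (1 - cdf μ t) = μ (Ioi t) := by
  rw [← aux_Gt μ t, ENNReal.ofReal_toReal (measure_ne_top _ _)]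

lemma aux_lint (h0 : μ (Iio 0) = 0) (hi : Integrable id μ) :
    ∫⁻ t in Ioi (0:ℝ), ENNReal.ofReal (1 - cdf μ t) < ⊤ := by
  have hnn : 0 ≤ᵐ[μ] id := by
    rw [EventuallyLE, ae_iff]
    simp only [Pi.zero_apply, id_eq, not_le]; exact h0
  calc ∫⁻ t in Ioi (0:ℝ), ENNReal.ofReal (1 - cdf μ t)
      = ∫⁻ t in Ioi (0:ℝ), μ {a : ℝ | t < id a} := by
        refine lintegral_congr fun t => ?_
        rw [aux_ofReal μ t]; rfl
    _ = ∫⁻ x, ENNReal.ofReal (id x) ∂μ :=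
        (lintegral_eq_lintegral_meas_lt μ hnn hi.aemeasurable).symm
    _ < ⊤ := hi.lintegral_lt_top

lemma lemB (h0 : μ (Iio 0) = 0) (hi : Integrable id μ) :
    ∫ p in (0:ℝ)..1, (2*p-1) * sInf {x | p ≤ cdf μ x}
      = ∫ t in Ioi (0:ℝ), cdf μ t * (1 - cdf μ t) := by
  set Q : ℝ → ℝ := fun p => sInf {x | p ≤ cdf μ x} with hQdef
  set A : Set (ℝ × ℝ) := {q | cdf μ q.2 < q.1} with hA
  have mA : MeasurableSet A :=
    measurableSet_lt ((monotone_cdf μ).measurable.comp measurable_snd) measurable_fst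
  set h : ℝ × ℝ → ℝ := fun q => 2*q.1 - 1 with hh
  have mh : Measurable h := (measurable_fst.const_mul 2).sub measurable_const
  set ν1 : Measure ℝ := volume.restrict (Ioo 0 1) with hn1
  set ν2 : Measure ℝ := volume.restrict (Ioi 0) with hn2
  have hprod : ν1.prod ν2 = (volume.prod volume).restrict ((Ioo (0:ℝ) 1) ×ˢ (Ioi (0:ℝ))) :=
    Measure.prod_restrict _ _
  have hAfin : (ν1.prod ν2) A < ⊤ := by
    rw [hprod, Measure.restrict_apply mA]
    set B := A ∩ (Ioo (0:ℝ) 1) ×ˢ (Ioi (0:ℝ)) with hB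
    have mB : MeasurableSet B := mA.inter (measurableSet_Ioo.prod measurableSet_Ioi)
    have hswap := Measure.measurePreserving_swap (μ := (volume : Measure ℝ)) (ν := (volume : Measure ℝ))
    rw [← hswap.map_eq, Measure.map_apply measurable_swap mB,
      Measure.prod_apply (measurable_swap mB)]
    have key : ∀ t : ℝ, volume (Prod.mk t ⁻¹' (Prod.swap ⁻¹' B))
        = (Ioi (0:ℝ)).indicator (fun t => ENNReal.ofReal (1 - cdf μ t)) t := by
      intro t
      rcases le_or_gt t 0 with ht | ht
      · have hemp : Prod.mk t ⁻¹' (Prod.swap ⁻¹' B) = ∅ := by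
          ext p
          simp only [hB, hA, Set.mem_preimage, Prod.swap, Set.mem_inter_iff, Set.mem_setOf_eq,
            Set.mem_prod, Set.mem_Ioo, Set.mem_Ioi, Set.mem_empty_iff_false, iff_false]
          rintro ⟨-, -, h3⟩
          exact absurd h3 (not_lt.mpr ht)
        rw [hemp, measure_empty, Set.indicator_of_notMem (by simpa using ht)]
      · have hset : Prod.mk t ⁻¹' (Prod.swap ⁻¹' B) = Ioo (cdf μ t) 1 := by
          ext p
          simp only [hB, hA, Set.mem_preimage, Prod.swap, Set.mem_inter_iff, Set.mem_setOf_eq,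
            Set.mem_prod, Set.mem_Ioo, Set.mem_Ioi]
          constructor
          · rintro ⟨h1, ⟨h2, h3⟩, _⟩; exact ⟨h1, h3⟩
          · rintro ⟨h1, h2⟩
            exact ⟨h1, ⟨lt_of_le_of_lt (cdf_nonneg μ t) h1, h2⟩, ht⟩
        rw [hset, Real.volume_Ioo, Set.indicator_of_mem (mem_Ioi.mpr ht)]
    calc ∫⁻ t, volume (Prod.mk t ⁻¹' (Prod.swap ⁻¹' B))
        = ∫⁻ t, (Ioi (0:ℝ)).indicator (fun t => ENNReal.ofReal (1 - cdf μ t)) t :=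
          lintegral_congr key
      _ = ∫⁻ t in Ioi (0:ℝ), ENNReal.ofReal (1 - cdf μ t) :=
          lintegral_indicator measurableSet_Ioi _
      _ < ⊤ := aux_lint μ h0 hi
  have hg_meas : Measurable (A.indicator h) := mh.indicator mA
  have hgi : Integrable (A.indicator h) (ν1.prod ν2) := by
    have h1 : Integrable (A.indicator fun _ => (1:ℝ)) (ν1.prod ν2) := by
      rw [integrable_indicator_iff mA]
      exact integrableOn_const hAfin.ne
    refine h1.mono' hg_meas.aestronglyMeasurable ?_
    rw [hprod]
    filter_upwards [ae_restrict_mem (measurableSet_Ioo.prod measurableSet_Ioi)] with q hq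
    rcases mem_prod.mp hq with ⟨hq1, -⟩
    by_cases hqA : q ∈ A
    · rw [Set.indicator_of_mem hqA, Set.indicator_of_mem hqA]
      simp only [hh, Real.norm_eq_abs]
      rw [abs_le]
      rcases hq1 with ⟨ha, hb⟩
      constructor <;> [linarith; linarith]
    · rw [Set.indicator_of_notMem hqA, Set.indicator_of_notMem hqA]
      simp
  have hswapInt := integral_integral_swap (μ := ν1) (ν := ν2)
      (f := fun p t => A.indicator h (p, t)) hgi
  have hQnn : ∀ p ∈ Ioo (0:ℝ) 1, 0 ≤ Q p := fun p hp =>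
    le_csInf (aux_nonempty μ hp.2) (aux_lb μ h0 hp.1)
  have hIio : ∀ p ∈ Ioo (0:ℝ) 1, {t : ℝ | cdf μ t < p} = Iio (Q p) := by
    intro p hp
    ext t
    simp only [mem_setOf_eq, mem_Iio]
    rw [← not_le, ← not_le]
    exact not_iff_not.mpr (aux_le_iff μ h0 hp t).symm
  have side1 : (∫ p, (∫ t, A.indicator h (p, t) ∂ν2) ∂ν1)
      = ∫ p in Ioo (0:ℝ) 1, (2*p-1) * Q p := by
    refine integral_congr_ae ?_
    filter_upwards [ae_restrict_mem measurableSet_Ioo] with p hp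
    have e1 : (fun t => A.indicator h (p, t)) = (Iio (Q p)).indicator (fun _ => 2*p - 1) := by
      funext t
      by_cases ht : cdf μ t < p
      · rw [Set.indicator_of_mem (show (p,t) ∈ A from ht),
          Set.indicator_of_mem (show t ∈ Iio (Q p) by rw [← hIio p hp]; exact ht)]
      · rw [Set.indicator_of_notMem (show (p,t) ∉ A from ht),
          Set.indicator_of_notMem (show t ∉ Iio (Q p) by rw [← hIio p hp]; exact ht)]
    rw [e1, integral_indicator measurableSet_Iio, hn2,
      Measure.restrict_restrict measurableSet_Iio, inter_comm, Ioi_inter_Iio,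
      setIntegral_const, Real.volume_real_Ioo, sub_zero, max_eq_left (hQnn p hp),
      smul_eq_mul]
    ring
  have side2 : (∫ t, (∫ p, A.indicator h (p, t) ∂ν1) ∂ν2)
      = ∫ t in Ioi (0:ℝ), cdf μ t * (1 - cdf μ t) := by
    refine integral_congr_ae (Eventually.of_forall fun t => ?_)
    have e1 : (fun p => A.indicator h (p, t)) = (Ioi (cdf μ t)).indicator (fun p => 2*p - 1) := by
      funext p
      by_cases hc : cdf μ t < p
      · rw [Set.indicator_of_mem (show (p,t) ∈ A from hc),
          Set.indicator_of_mem (show p ∈ Ioi (cdf μ t) from hc)]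
      · rw [Set.indicator_of_notMem (show (p,t) ∉ A from hc),
          Set.indicator_of_notMem (show p ∉ Ioi (cdf μ t) from hc)]
    show (∫ p, A.indicator h (p, t) ∂ν1) = cdf μ t * (1 - cdf μ t)
    rw [e1, integral_indicator measurableSet_Ioi, hn1,
      Measure.restrict_restrict measurableSet_Ioi]
    have e2 : Ioi (cdf μ t) ∩ Ioo (0:ℝ) 1 = Ioo (cdf μ t) 1 := by
      ext p
      simp only [mem_inter_iff, mem_Ioi, mem_Ioo]
      exact ⟨fun ⟨h1, _, h3⟩ => ⟨h1, h3⟩,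
        fun ⟨h1, h2⟩ => ⟨h1, lt_of_le_of_lt (cdf_nonneg μ t) h1, h2⟩⟩
    rw [e2, ← integral_Ioc_eq_integral_Ioo, ← intervalIntegral.integral_of_le (cdf_le_one μ t)]
    have e3 : (∫ p in (cdf μ t)..1, (2*p - 1)) = cdf μ t - (cdf μ t)^2 := by
      rw [intervalIntegral.integral_sub (f := fun p : ℝ => 2*p) (g := fun _ => (1:ℝ))
        ((continuous_const.mul continuous_id').intervalIntegrable _ _)
        intervalIntegrable_const, intervalIntegral.integral_const_mul, integral_id,
        intervalIntegral.integral_const, smul_eq_mul]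
      ring
    rw [e3]
    ring
  calc ∫ p in (0:ℝ)..1, (2*p-1) * sInf {x | p ≤ cdf μ x}
      = ∫ p in Ioo (0:ℝ) 1, (2*p-1) * Q p := by
        rw [intervalIntegral.integral_of_le zero_le_one, integral_Ioc_eq_integral_Ioo]
    _ = (∫ p, (∫ t, A.indicator h (p, t) ∂ν2) ∂ν1) := side1.symm
    _ = (∫ t, (∫ p, A.indicator h (p, t) ∂ν1) ∂ν2) := hswapInt
    _ = ∫ t in Ioi (0:ℝ), cdf μ t * (1 - cdf μ t) := side2

end


theorem stmt_8
    {Ω : Type*} [MeasurableSpace Ω] (P : Measure Ω) [IsProbabilityMeasure P]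
    (X X' : Ω → ℝ) (hX : Measurable X) (hX' : Measurable X')
    (hpos : ∀ ω, 0 ≤ X ω) (hint : Integrable X P)
    (hindep : IndepFun X X' P)
    (hlaw : Measure.map X' P = Measure.map X P) :
    (∫ ω, |X ω - X' ω| ∂P)
      = 2 * ∫ p in (0 : ℝ)..1,
          (2 * p - 1) * sInf {x : ℝ | p ≤ (P {ω | X ω ≤ x}).toReal} := by
  have hXmeas : ∀ t : ℝ, MeasurableSet {ω | X ω ≤ t} := fun t => hX measurableSet_Iic
  set G : ℝ → ℝ := fun t => (P {ω | t < X ω}).toReal with hGdef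
  have hid : Integrable id (Measure.map X P) :=
    (integrable_map_measure aestronglyMeasurable_id hX.aemeasurable).mpr hint
  have hX'int : Integrable X' P := by
    have h2 : Integrable id (Measure.map X' P) := by rw [hlaw]; exact hid
    exact (integrable_map_measure aestronglyMeasurable_id hX'.aemeasurable).mp h2
  have hX'pos : ∀ᵐ ω ∂P, 0 ≤ X' ω := by
    have h1 : (Measure.map X' P) (Iio 0) = 0 := by
      rw [hlaw, Measure.map_apply hX measurableSet_Iio]
      have he : X ⁻¹' (Iio 0) = ∅ := by
        ext ω; simp [not_lt.mpr (hpos ω)]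
      rw [he, measure_empty]
    rw [Measure.map_apply hX' measurableSet_Iio] at h1
    rw [ae_iff]
    have he2 : {ω | ¬ 0 ≤ X' ω} = X' ⁻¹' (Iio 0) := by ext ω; simp [not_le]
    rw [he2]; exact h1
  have hmin_int : Integrable (fun ω => min (X ω) (X' ω)) P := by
    have := hint.inf hX'int
    exact this
  have hminpos : 0 ≤ᵐ[P] fun ω => min (X ω) (X' ω) := by
    filter_upwards [hX'pos] with ω h using le_min (hpos ω) h
  have h1 : ∫ ω, X ω ∂P = ∫ t in Ioi (0:ℝ), G t :=
    hint.integral_eq_integral_meas_lt (Eventually.of_forall hpos)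
  have hGsq : ∀ t : ℝ, (P {ω | t < min (X ω) (X' ω)}).toReal = G t ^ 2 := by
    intro t
    have hset : {ω | t < min (X ω) (X' ω)} = X ⁻¹' (Ioi t) ∩ X' ⁻¹' (Ioi t) := by
      ext ω; simp [lt_min_iff]
    have hX'm : P (X' ⁻¹' (Ioi t)) = P (X ⁻¹' (Ioi t)) := by
      rw [← Measure.map_apply hX' measurableSet_Ioi, hlaw, Measure.map_apply hX measurableSet_Ioi]
    rw [hset, hindep.measure_inter_preimage_eq_mul (Ioi t) (Ioi t) measurableSet_Ioi measurableSet_Ioi, hX'm,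
      ENNReal.toReal_mul]
    have hr : P (X ⁻¹' (Ioi t)) = P {ω | t < X ω} := rfl
    rw [hr]
    simp only [hGdef]
    ring
  have h2 : ∫ ω, min (X ω) (X' ω) ∂P = ∫ t in Ioi (0:ℝ), G t ^ 2 := by
    rw [hmin_int.integral_eq_integral_meas_lt hminpos]
    exact integral_congr_ae (Eventually.of_forall fun t => hGsq t)
  have hGanti : Antitone G := by
    intro s t hst
    exact ENNReal.toReal_mono (measure_ne_top _ _)
      (measure_mono fun ω h => lt_of_le_of_lt hst h)
  have hGmeas : Measurable G := hGanti.measurable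
  have hGnn : ∀ t, 0 ≤ G t := fun t => ENNReal.toReal_nonneg
  have hGle1 : ∀ t, G t ≤ 1 := by
    intro t
    calc G t ≤ (1:ENNReal).toReal := ENNReal.toReal_mono ENNReal.one_ne_top prob_le_one
      _ = 1 := ENNReal.toReal_one
  have hGint : Integrable G (volume.restrict (Ioi 0)) := by
    refine ⟨hGmeas.aestronglyMeasurable, ?_⟩
    rw [hasFiniteIntegral_iff_ofReal (Eventually.of_forall hGnn)]
    have hOR : ∀ t : ℝ, ENNReal.ofReal (G t) = P {ω | t < X ω} := fun t =>
      ENNReal.ofReal_toReal (measure_ne_top _ _)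
    calc ∫⁻ t in Ioi (0:ℝ), ENNReal.ofReal (G t)
        = ∫⁻ t in Ioi (0:ℝ), P {ω | t < X ω} := lintegral_congr fun t => hOR t
      _ = ∫⁻ ω, ENNReal.ofReal (X ω) ∂P :=
          (lintegral_eq_lintegral_meas_lt P (Eventually.of_forall hpos) hX.aemeasurable).symm
      _ < ⊤ := hint.lintegral_lt_top
  have hG2int : Integrable (fun t => G t ^ 2) (volume.restrict (Ioi 0)) := by
    refine hGint.mono ((hGmeas.pow_const 2).aestronglyMeasurable) ?_
    refine Eventually.of_forall fun t => ?_
    rw [Real.norm_eq_abs, Real.norm_eq_abs, abs_of_nonneg (by positivity),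
      abs_of_nonneg (hGnn t)]
    nlinarith [hGnn t, hGle1 t]
  have habs : (fun ω => |X ω - X' ω|) = fun ω => X ω + X' ω - 2 * min (X ω) (X' ω) := by
    funext ω
    rcases le_total (X ω) (X' ω) with hle | hle
    · rw [abs_of_nonpos (by linarith), min_eq_left hle]; ring
    · rw [abs_of_nonneg (by linarith), min_eq_right hle]; ring
  have hX'eq : ∫ ω, X' ω ∂P = ∫ ω, X ω ∂P := by
    have e1 : ∫ y, y ∂(Measure.map X' P) = ∫ ω, X' ω ∂P :=
      integral_map hX'.aemeasurable aestronglyMeasurable_id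
    have e2 : ∫ y, y ∂(Measure.map X P) = ∫ ω, X ω ∂P :=
      integral_map hX.aemeasurable aestronglyMeasurable_id
    rw [← e1, hlaw, e2]
  have key : ∫ ω, |X ω - X' ω| ∂P = 2 * ∫ t in Ioi (0:ℝ), (G t - G t ^ 2) := by
    rw [habs, integral_sub (f := fun ω => X ω + X' ω) (g := fun ω => 2 * min (X ω) (X' ω)) (hint.add hX'int) (hmin_int.const_mul 2), integral_add hint hX'int,
      integral_const_mul, hX'eq, h1, h2, integral_sub hGint hG2int]
    ring
  have hFG : ∀ t : ℝ, (P {ω | X ω ≤ t}).toReal = 1 - G t := by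
    intro t
    have hc : {ω | X ω ≤ t}ᶜ = {ω | t < X ω} := by ext ω; simp [not_le]
    have hm : P {ω | t < X ω} = 1 - P {ω | X ω ≤ t} := by
      rw [← hc, measure_compl (hXmeas t) (measure_ne_top _ _), measure_univ]
    have h3 := congrArg ENNReal.toReal hm
    rw [ENNReal.toReal_sub_of_le prob_le_one ENNReal.one_ne_top, ENNReal.toReal_one] at h3
    simp only [hGdef]
    linarith [h3]
  have hGF : ∀ t : ℝ, G t - G t ^ 2
      = (P {ω | X ω ≤ t}).toReal * (1 - (P {ω | X ω ≤ t}).toReal) := by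
    intro t; rw [hFG t]; ring
  set μ := Measure.map X P with hμ
  haveI : IsProbabilityMeasure μ := Measure.isProbabilityMeasure_map hX.aemeasurable
  have hμ0 : μ (Iio 0) = 0 := by
    rw [hμ, Measure.map_apply hX measurableSet_Iio]
    have he : X ⁻¹' (Iio 0) = ∅ := by ext ω; simp [not_lt.mpr (hpos ω)]
    rw [he, measure_empty]
  have hcdf : ∀ x : ℝ, (P {ω | X ω ≤ x}).toReal = cdf μ x := by
    intro x
    rw [cdf_eq_real, measureReal_def, hμ, Measure.map_apply hX measurableSet_Iic]
    rfl
  calc ∫ ω, |X ω - X' ω| ∂P = 2 * ∫ t in Ioi (0:ℝ), (G t - G t ^ 2) := key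
    _ = 2 * ∫ t in Ioi (0:ℝ), cdf μ t * (1 - cdf μ t) := by
        congr 1
        refine integral_congr_ae (Eventually.of_forall fun t => ?_)
        show G t - G t ^ 2 = cdf μ t * (1 - cdf μ t)
        rw [hGF t, hcdf t]
    _ = 2 * ∫ p in (0:ℝ)..1, (2*p-1) * sInf {x | p ≤ cdf μ x} := by
        rw [lemB μ hμ0 hid]
    _ = 2 * ∫ p in (0 : ℝ)..1,
          (2 * p - 1) * sInf {x : ℝ | p ≤ (P {ω | X ω ≤ x}).toReal} := by
        congr 1
        refine intervalIntegral.integral_congr fun p hp => ?_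
        have hs : {x : ℝ | p ≤ (P {ω | X ω ≤ x}).toReal} = {x | p ≤ cdf μ x} := by
          ext x; rw [mem_setOf_eq, mem_setOf_eq, hcdf x]
        rw [hs]
end

section
/- Let f, a, b : [0,1] → ℝ be integrable functions with 0 ≤ a(p) ≤ f(p) ≤ b(p) for all p ∈ [0,1] and ∫_0^1 a(p) dp > 0. Then (∫_0^1 |f(p) − ∫_0^1 f(q) dq| dp) / (2 ∫_0^1 f(p) dp) ≤ (∫_0^1 max( |a(p) − ∫_0^1 b(q) dq| , |b(p) − ∫_0^1 a(q) dq| ) dp) / (2 ∫_0^1 a(p) dp). -/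
open MeasureTheory Set

theorem stmt_14 (f a b : ℝ → ℝ)
    (hf : IntervalIntegrable f volume 0 1)
    (ha : IntervalIntegrable a volume 0 1)
    (hb : IntervalIntegrable b volume 0 1)
    (h0 : ∀ p ∈ Set.Icc (0 : ℝ) 1, 0 ≤ a p)
    (haf : ∀ p ∈ Set.Icc (0 : ℝ) 1, a p ≤ f p)
    (hfb : ∀ p ∈ Set.Icc (0 : ℝ) 1, f p ≤ b p)
    (hpos : 0 < ∫ p in (0 : ℝ)..1, a p) :
    (∫ p in (0 : ℝ)..1, |f p - ∫ q in (0 : ℝ)..1, f q|) / (2 * ∫ p in (0 : ℝ)..1, f p)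
      ≤ (∫ p in (0 : ℝ)..1,
            max |a p - ∫ q in (0 : ℝ)..1, b q| |b p - ∫ q in (0 : ℝ)..1, a q|)
          / (2 * ∫ p in (0 : ℝ)..1, a p) := by
  have h01 : (0:ℝ) ≤ 1 := by norm_num
  have haF : (∫ p in (0:ℝ)..1, a p) ≤ ∫ p in (0:ℝ)..1, f p :=
    intervalIntegral.integral_mono_on h01 ha hf haf
  have hFb : (∫ p in (0:ℝ)..1, f p) ≤ ∫ p in (0:ℝ)..1, b p :=
    intervalIntegral.integral_mono_on h01 hf hb hfb
  set F := ∫ q in (0:ℝ)..1, f q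
  set A := ∫ q in (0:ℝ)..1, a q
  set B := ∫ q in (0:ℝ)..1, b q
  have hint1 : IntervalIntegrable (fun p => |f p - F|) volume 0 1 :=
    (hf.sub intervalIntegrable_const).abs
  have hi1 : IntervalIntegrable (fun p => |a p - B|) volume 0 1 :=
    (ha.sub intervalIntegrable_const).abs
  have hi2 : IntervalIntegrable (fun p => |b p - A|) volume 0 1 :=
    (hb.sub intervalIntegrable_const).abs
  have hint2 : IntervalIntegrable
      (fun p => max |a p - B| |b p - A|) volume 0 1 := by
    have heq : (fun p => max |a p - B| |b p - A|)
        = fun p => (|a p - B| + |b p - A| + |(|a p - B| - |b p - A|)|) / 2 := by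
      funext p
      rcases le_total |a p - B| |b p - A| with h | h
      · rw [max_eq_right h, abs_of_nonpos (sub_nonpos.mpr h)]; ring
      · rw [max_eq_left h, abs_of_nonneg (sub_nonneg.mpr h)]; ring
    rw [heq]
    exact (((hi1.add hi2).add ((hi1.sub hi2).abs)).div_const 2)
  have hnum : (∫ p in (0:ℝ)..1, |f p - F|)
      ≤ ∫ p in (0:ℝ)..1, max |a p - B| |b p - A| := by
    apply intervalIntegral.integral_mono_on h01 hint1 hint2
    intro p hp
    rw [abs_le]
    constructor
    · have h2 : -(max |a p - B| |b p - A|) ≤ a p - B := by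
        have : -(|a p - B|) ≤ a p - B := neg_abs_le _
        exact le_trans (neg_le_neg (le_max_left _ _)) this
      have h3 : a p - B ≤ f p - F := by
        have := haf p hp; linarith [hFb]
      linarith
    · have h3 : f p - F ≤ b p - A := by
        have := hfb p hp; linarith [haF]
      exact le_trans h3 (le_trans (le_abs_self _) (le_max_right _ _))
  have hnn : 0 ≤ ∫ p in (0:ℝ)..1, max |a p - B| |b p - A| := by
    apply intervalIntegral.integral_nonneg h01
    intro p hp
    exact le_trans (abs_nonneg _) (le_max_left _ _)
  have hden : 0 < 2 * A := by linarith
  have hden2 : 2 * A ≤ 2 * F := by linarith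
  exact div_le_div₀ hnn hnum hden hden2
end
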